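/- Properties of the auxiliary function g: Let p ∈ (1,∞) and define g : (0,1) → ℝ by g(t) = (1 − t^{1−p})/(1 − t). Then: (i) g is increasing on (0,1); (ii) g(t) ≤ −(p − 1) for every t ∈ (0,1); (iii) g(t) ≤ −((p − 1)/2^p) · t^{1−p}/(1 − t) for every t ∈ (0, 1/2]. -/

import Mathlib

open Real

noncomputable section

/-- The auxiliary function g(t) = (1 - t^{1-p})/(1 - t). -/
def gAux (p t : ℝ) : ℝ := (1 - t ^ (1 - p)) / (1 - t)

lemma gAux_key1 (p t : ℝ) (hp : 1 < p) (ht : 0 < t) :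
    p * t ^ (1 - p) ≤ (p - 1) * t ^ (-p) + 1 := by
  have hp0 : (0 : ℝ) < p := by linarith
  have h := Real.geom_mean_le_arith_mean2_weighted
    (w₁ := (p - 1) / p) (w₂ := 1 / p) (p₁ := t ^ (-p)) (p₂ := 1)
    (div_nonneg (by linarith) (by linarith)) (by positivity)
    (Real.rpow_nonneg ht.le _) zero_le_one (by field_simp; ring)
  have hgm : (t ^ (-p)) ^ ((p - 1) / p) * (1 : ℝ) ^ (1 / p) = t ^ (1 - p) := by
    rw [Real.one_rpow, mul_one, ← Real.rpow_mul ht.le]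
    congr 1
    field_simp
    ring
  rw [hgm] at h
  have := mul_le_mul_of_nonneg_left h hp0.le
  calc p * t ^ (1 - p) ≤ p * ((p - 1) / p * t ^ (-p) + 1 / p * 1) := this
    _ = (p - 1) * t ^ (-p) + 1 := by field_simp; try ring

lemma gAux_key2 (p t : ℝ) (hp : 1 < p) (ht : 0 < t) :
    p ≤ t ^ (1 - p) + (p - 1) * t := by
  have hp0 : (0 : ℝ) < p := by linarith
  have h := Real.geom_mean_le_arith_mean2_weighted
    (w₁ := 1 / p) (w₂ := (p - 1) / p) (p₁ := t ^ (1 - p)) (p₂ := t)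
    (by positivity) (div_nonneg (by linarith) (by linarith))
    (Real.rpow_nonneg ht.le _) ht.le (by field_simp; ring)
  have hgm : (t ^ (1 - p)) ^ (1 / p) * t ^ ((p - 1) / p) = 1 := by
    rw [← Real.rpow_mul ht.le, ← Real.rpow_add ht]
    rw [show (1 - p) * (1 / p) + (p - 1) / p = 0 by field_simp; ring]
    exact Real.rpow_zero t
  rw [hgm] at h
  have := mul_le_mul_of_nonneg_left h hp0.le
  calc p = p * 1 := by ring
    _ ≤ p * (1 / p * t ^ (1 - p) + (p - 1) / p * t) := this
    _ = t ^ (1 - p) + (p - 1) * t := by field_simp; try ring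

lemma gAux_key3 (p : ℝ) (hp : 1 < p) : p + 1 ≤ (2 : ℝ) ^ p := by
  have h := one_add_mul_self_le_rpow_one_add (s := 1) (by norm_num) hp.le
  norm_num at h
  linarith

lemma gAux_hasDerivAt (p t : ℝ) (hp : 1 < p) (ht : t ∈ Set.Ioo (0 : ℝ) 1) :
    HasDerivAt (gAux p)
      ((-((1 - p) * t ^ (1 - p - 1)) * (1 - t) - (1 - t ^ (1 - p)) * (-1)) / (1 - t) ^ 2) t := by
  have h1 : HasDerivAt (fun x : ℝ => x ^ (1 - p)) ((1 - p) * t ^ (1 - p - 1)) t :=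
    Real.hasDerivAt_rpow_const (Or.inl ht.1.ne')
  have hnum : HasDerivAt (fun x : ℝ => 1 - x ^ (1 - p)) (-((1 - p) * t ^ (1 - p - 1))) t := by
    exact h1.const_sub 1
  have hden : HasDerivAt (fun x : ℝ => 1 - x) (-1 : ℝ) t := by
    simpa using (hasDerivAt_id t).const_sub (1 : ℝ)
  exact hnum.div hden (by linarith [ht.2] : (1 : ℝ) - t ≠ 0)

lemma gAux_deriv_nonneg (p t : ℝ) (hp : 1 < p) (ht : t ∈ Set.Ioo (0 : ℝ) 1) :
    0 ≤ (-((1 - p) * t ^ (1 - p - 1)) * (1 - t) - (1 - t ^ (1 - p)) * (-1)) / (1 - t) ^ 2 := by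
  obtain ⟨ht0, ht1⟩ := ht
  have h1t : (0 : ℝ) < 1 - t := by linarith
  apply div_nonneg _ (by positivity)
  have he1 : t ^ (1 - p - 1) = t ^ (-p) := by rw [show 1 - p - 1 = -p by ring]
  have he2 : t ^ (1 - p) = t ^ (-p) * t := by
    rw [show (1 : ℝ) - p = -p + 1 by ring, Real.rpow_add ht0, Real.rpow_one]
  have hkey := gAux_key1 p t hp ht0
  rw [he2] at hkey
  rw [he1, he2]
  nlinarith [Real.rpow_pos_of_pos ht0 (-p)]

theorem gAux_properties (p : ℝ) (hp : 1 < p) :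
    (∀ t₁ ∈ Set.Ioo (0 : ℝ) 1, ∀ t₂ ∈ Set.Ioo (0 : ℝ) 1, t₁ ≤ t₂ → gAux p t₁ ≤ gAux p t₂) ∧
    (∀ t ∈ Set.Ioo (0 : ℝ) 1, gAux p t ≤ -(p - 1)) ∧
    (∀ t ∈ Set.Ioc (0 : ℝ) (1 / 2), gAux p t ≤ -((p - 1) / 2 ^ p) * (t ^ (1 - p) / (1 - t))) := by
  refine ⟨?_, ?_, ?_⟩
  · -- monotonicity
    have hmono : MonotoneOn (gAux p) (Set.Ioo (0 : ℝ) 1) := by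
      apply monotoneOn_of_deriv_nonneg (convex_Ioo 0 1)
      · intro x hx
        exact ((gAux_hasDerivAt p x hp hx).continuousAt).continuousWithinAt
      · rw [interior_Ioo]
        intro x hx
        exact ((gAux_hasDerivAt p x hp hx).differentiableAt).differentiableWithinAt
      · rw [interior_Ioo]
        intro x hx
        rw [(gAux_hasDerivAt p x hp hx).deriv]
        exact gAux_deriv_nonneg p x hp hx
    exact fun t₁ h₁ t₂ h₂ h ↦ hmono h₁ h₂ h
  · -- g ≤ -(p-1)
    intro t ht
    obtain ⟨ht0, ht1⟩ := ht
    have h1t : (0 : ℝ) < 1 - t := by linarith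
    rw [gAux, div_le_iff₀ h1t]
    have := gAux_key2 p t hp ht0
    nlinarith
  · -- g(t) ≤ -((p-1)/2^p) t^{1-p}/(1-t)
    intro t ht
    obtain ⟨ht0, ht2⟩ := ht
    have h1t : (0 : ℝ) < 1 - t := by linarith
    have hB : (0 : ℝ) < (2 : ℝ) ^ p := Real.rpow_pos_of_pos (by norm_num) p
    have hA : (2 : ℝ) ^ (p - 1) ≤ t ^ (1 - p) := by
      have h := Real.rpow_le_rpow_of_nonpos ht0 ht2 (by linarith : 1 - p ≤ 0)
      calc (2 : ℝ) ^ (p - 1) = ((1 : ℝ) / 2) ^ (1 - p) := by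
            rw [one_div, Real.inv_rpow (by norm_num), ← Real.rpow_neg (by norm_num)]
            norm_num
        _ ≤ t ^ (1 - p) := h
    have hBern := gAux_key3 p hp
    have h2p : (2 : ℝ) ^ (p - 1) * 2 = (2 : ℝ) ^ p := by
      have h := Real.rpow_add (show (0:ℝ) < 2 by norm_num) (p - 1) 1
      rw [Real.rpow_one, show p - 1 + 1 = p by ring] at h
      linarith
    -- key: 2^p ≤ t^{1-p} * (2^p - p + 1)
    have hfac : (0 : ℝ) < (2 : ℝ) ^ p - p + 1 := by linarith
    have hmain : (2 : ℝ) ^ p ≤ t ^ (1 - p) * ((2 : ℝ) ^ p - p + 1) := by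
      calc (2 : ℝ) ^ p = (2 : ℝ) ^ (p - 1) * 2 := h2p.symm
        _ ≤ (2 : ℝ) ^ (p - 1) * ((2 : ℝ) ^ p - p + 1) := by
            apply mul_le_mul_of_nonneg_left (by linarith) (by positivity)
        _ ≤ t ^ (1 - p) * ((2 : ℝ) ^ p - p + 1) :=
            mul_le_mul_of_nonneg_right hA hfac.le
    rw [gAux, div_le_iff₀ h1t]
    have hsimp : -((p - 1) / (2:ℝ) ^ p) * (t ^ (1 - p) / (1 - t)) * (1 - t)
        = (-((p - 1) * t ^ (1 - p))) / (2:ℝ) ^ p := by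
      field_simp
    rw [hsimp, le_div_iff₀ hB]
    nlinarith

end
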